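/- For every r with |r| ≤ 1, the power mean H_r on the positive cone Γ₊ ⊂ ℝⁿ is inverse-concave: the function x ↦ -H_r(x₁⁻¹,...,xₙ⁻¹) is concave on Γ₊. -/

import Mathlib

noncomputable section

/-- The open positive cone in `ℝⁿ`. -/
def posCone (n : ℕ) : Set (Fin n → ℝ) := {x | ∀ i, 0 < x i}

/-- The power mean `H_r`, with `H_0` the geometric mean. -/
def powerMean (n : ℕ) (r : ℝ) (x : Fin n → ℝ) : ℝ :=
  if r = 0 then (∏ i, x i) ^ ((1 : ℝ) / n)
  else ((1 / n : ℝ) * ∑ i, x i ^ r) ^ (1 / r)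

lemma posCone_convex (n : ℕ) : Convex ℝ (posCone n) := by
  intro x hx y hy a b ha hb hab
  intro i
  simp only [Pi.add_apply, Pi.smul_apply, smul_eq_mul]
  have h1 : a * min (x i) (y i) ≤ a * x i :=
    mul_le_mul_of_nonneg_left (min_le_left _ _) ha
  have h2 : b * min (x i) (y i) ≤ b * y i :=
    mul_le_mul_of_nonneg_left (min_le_right _ _) hb
  have hm : 0 < min (x i) (y i) := lt_min (hx i) (hy i)
  nlinarith

section comp

variable {E : Type*} [AddCommGroup E] [Module ℝ E] {s : Set E} {t : Set ℝ}
  {f : E → ℝ} {g : ℝ → ℝ}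

lemma aux_comp_mono (hg : ConvexOn ℝ t g) (hf : ConvexOn ℝ s f)
    (hmaps : Set.MapsTo f s t) (hmono : MonotoneOn g t) :
    ConvexOn ℝ s (fun x => g (f x)) := by
  refine ⟨hf.1, fun x hx y hy a b ha hb hab => ?_⟩
  have hxy := hf.1 hx hy ha hb hab
  have h1 : f (a • x + b • y) ≤ a * f x + b * f y := by
    simpa [smul_eq_mul] using hf.2 hx hy ha hb hab
  have ht : a * f x + b * f y ∈ t := by
    simpa [smul_eq_mul] using hg.1 (hmaps hx) (hmaps hy) ha hb hab
  simp only [smul_eq_mul]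
  calc g (f (a • x + b • y)) ≤ g (a * f x + b * f y) := hmono (hmaps hxy) ht h1
    _ ≤ a * g (f x) + b * g (f y) := by
        simpa [smul_eq_mul] using hg.2 (hmaps hx) (hmaps hy) ha hb hab

lemma aux_comp_anti (hg : ConvexOn ℝ t g) (hf : ConcaveOn ℝ s f)
    (hmaps : Set.MapsTo f s t) (hanti : AntitoneOn g t) :
    ConvexOn ℝ s (fun x => g (f x)) := by
  refine ⟨hf.1, fun x hx y hy a b ha hb hab => ?_⟩
  have hxy := hf.1 hx hy ha hb hab
  have h1 : a * f x + b * f y ≤ f (a • x + b • y) := by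
    simpa [smul_eq_mul] using hf.2 hx hy ha hb hab
  have ht : a * f x + b * f y ∈ t := by
    simpa [smul_eq_mul] using hg.1 (hmaps hx) (hmaps hy) ha hb hab
  simp only [smul_eq_mul]
  calc g (f (a • x + b • y)) ≤ g (a * f x + b * f y) := hanti ht (hmaps hxy) h1
    _ ≤ a * g (f x) + b * g (f y) := by
        simpa [smul_eq_mul] using hg.2 (hmaps hx) (hmaps hy) ha hb hab

lemma aux_sum_convex {ι : Type*} (T : Finset ι) (hs : Convex ℝ s) {F : ι → E → ℝ}
    (h : ∀ i ∈ T, ConvexOn ℝ s (F i)) : ConvexOn ℝ s (fun x => ∑ i ∈ T, F i x) := by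
  refine ⟨hs, fun x hx y hy a b ha hb hab => ?_⟩
  simp only [smul_eq_mul, Finset.mul_sum, ← Finset.sum_add_distrib]
  exact Finset.sum_le_sum fun i hi => by
    simpa [smul_eq_mul] using (h i hi).2 hx hy ha hb hab

lemma aux_sum_concave {ι : Type*} (T : Finset ι) (hs : Convex ℝ s) {F : ι → E → ℝ}
    (h : ∀ i ∈ T, ConcaveOn ℝ s (F i)) : ConcaveOn ℝ s (fun x => ∑ i ∈ T, F i x) := by
  refine ⟨hs, fun x hx y hy a b ha hb hab => ?_⟩
  simp only [smul_eq_mul, Finset.mul_sum, ← Finset.sum_add_distrib]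
  exact Finset.sum_le_sum fun i hi => by
    simpa [smul_eq_mul] using (h i hi).2 hx hy ha hb hab

end comp

lemma aux_eval_convex {n : ℕ} {t : Set ℝ} {g : ℝ → ℝ} (hg : ConvexOn ℝ t g) (i : Fin n)
    (h : ∀ x ∈ posCone n, x i ∈ t) : ConvexOn ℝ (posCone n) (fun x => g (x i)) :=
  ⟨posCone_convex n, fun x hx y hy a b ha hb hab => by
    simpa [smul_eq_mul] using hg.2 (h x hx) (h y hy) ha hb hab⟩

lemma aux_eval_concave {n : ℕ} {t : Set ℝ} {g : ℝ → ℝ} (hg : ConcaveOn ℝ t g) (i : Fin n)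
    (h : ∀ x ∈ posCone n, x i ∈ t) : ConcaveOn ℝ (posCone n) (fun x => g (x i)) :=
  ⟨posCone_convex n, fun x hx y hy a b ha hb hab => by
    simpa [smul_eq_mul] using hg.2 (h x hx) (h y hy) ha hb hab⟩

lemma convexOn_rpow_neg {q : ℝ} (hq : q ≤ 0) :
    ConvexOn ℝ (Set.Ioi 0) fun t : ℝ => t ^ q := by
  have hlog : ConvexOn ℝ (Set.Ioi (0:ℝ)) fun t => q * Real.log t := by
    have h1 : ConvexOn ℝ (Set.Ioi (0:ℝ)) (-Real.log) :=
      strictConcaveOn_log_Ioi.concaveOn.neg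
    have h2 := h1.smul (c := -q) (by linarith)
    refine h2.congr fun u _ => ?_
    simp only [Pi.smul_apply, Pi.neg_apply, smul_eq_mul]
    ring
  have hexp : ConvexOn ℝ (Set.Ioi (0:ℝ)) fun t => Real.exp (q * Real.log t) :=
    aux_comp_mono convexOn_exp hlog (Set.mapsTo_univ _ _)
      (Real.exp_monotone.monotoneOn _)
  refine hexp.congr fun u hu => ?_
  rw [Real.rpow_def_of_pos hu, mul_comm]

theorem stmt5 {n : ℕ} (hn : 0 < n) (r : ℝ) (hr : |r| ≤ 1) :
    ConcaveOn ℝ (posCone n) (fun x => -powerMean n r (fun i => (x i)⁻¹)) := by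
  obtain ⟨hr1, hr2⟩ := abs_le.mp hr
  have hnR : (0:ℝ) < n := Nat.cast_pos.mpr hn
  suffices h : ConvexOn ℝ (posCone n) (fun x => powerMean n r (fun i => (x i)⁻¹)) by
    exact h.neg
  rcases eq_or_ne r 0 with rfl | hr0
  · -- geometric mean case
    have hinner : ConvexOn ℝ (posCone n) fun x => (1 / n : ℝ) * ∑ i, -Real.log (x i) := by
      have hsum : ConvexOn ℝ (posCone n) fun x => ∑ i, -Real.log (x i) :=
        aux_sum_convex Finset.univ (posCone_convex n) fun i _ =>
          aux_eval_convex strictConcaveOn_log_Ioi.concaveOn.neg i fun x hx => hx i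
      have := hsum.smul (c := (1 / n : ℝ)) (by positivity)
      exact this.congr fun x _ => by simp [smul_eq_mul]
    have hexp : ConvexOn ℝ (posCone n) fun x =>
        Real.exp ((1 / n : ℝ) * ∑ i, -Real.log (x i)) :=
      aux_comp_mono convexOn_exp hinner (Set.mapsTo_univ _ _)
        (Real.exp_monotone.monotoneOn _)
    refine hexp.congr fun x hx => ?_
    have hprod : (0:ℝ) < ∏ i, (x i)⁻¹ :=
      Finset.prod_pos fun i _ => inv_pos.mpr (hx i)
    simp only [powerMean, if_pos rfl]
    rw [Real.rpow_def_of_pos hprod,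
      Real.log_prod fun i _ => (inv_pos.mpr (hx i)).ne']
    simp only [Real.log_inv]
    ring_nf
    simp
  · -- reduce to exponent -r on x itself
    have key : ConvexOn ℝ (posCone n)
        fun x => ((1 / n : ℝ) * ∑ i, (x i) ^ (-r)) ^ (1 / r) := by
      rcases lt_or_gt_of_ne hr0 with hneg | hpos
      · -- r < 0 : inner concave (exponent -r ∈ (0,1]), outer convex antitone
        have hinner : ConcaveOn ℝ (posCone n) fun x => (1 / n : ℝ) * ∑ i, (x i) ^ (-r) := by
          have hsum : ConcaveOn ℝ (posCone n) fun x => ∑ i, (x i) ^ (-r) :=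
            aux_sum_concave Finset.univ (posCone_convex n) fun i _ =>
              aux_eval_concave (Real.concaveOn_rpow (by linarith) (by linarith)) i
                fun x hx => (hx i).le
          have := hsum.smul (c := (1 / n : ℝ)) (by positivity)
          exact this.congr fun x _ => by simp [smul_eq_mul]
        have hmaps : Set.MapsTo (fun x => (1 / n : ℝ) * ∑ i, (x i) ^ (-r))
            (posCone n) (Set.Ioi (0:ℝ)) := by
          intro x hx
          have : (0:ℝ) < ∑ i, (x i) ^ (-r) :=
            Finset.sum_pos (fun i _ => Real.rpow_pos_of_pos (hx i) _)
              (Finset.univ_nonempty_iff.mpr ⟨⟨0, hn⟩⟩)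
          exact Set.mem_Ioi.mpr (by positivity)
        exact aux_comp_anti (convexOn_rpow_neg
            (div_nonpos_of_nonneg_of_nonpos zero_le_one hneg.le)) hinner hmaps
          (Real.antitoneOn_rpow_Ioi_of_exponent_nonpos
            (div_nonpos_of_nonneg_of_nonpos zero_le_one hneg.le))
      · -- r > 0 : inner convex (exponent -r < 0), outer convex monotone (1/r ≥ 1)
        have hinner : ConvexOn ℝ (posCone n) fun x => (1 / n : ℝ) * ∑ i, (x i) ^ (-r) := by
          have hsum : ConvexOn ℝ (posCone n) fun x => ∑ i, (x i) ^ (-r) :=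
            aux_sum_convex Finset.univ (posCone_convex n) fun i _ =>
              aux_eval_convex (convexOn_rpow_neg (by linarith)) i fun x hx => hx i
          have := hsum.smul (c := (1 / n : ℝ)) (by positivity)
          exact this.congr fun x _ => by simp [smul_eq_mul]
        have hmaps : Set.MapsTo (fun x => (1 / n : ℝ) * ∑ i, (x i) ^ (-r))
            (posCone n) (Set.Ici (0:ℝ)) := by
          intro x hx
          have : (0:ℝ) ≤ ∑ i, (x i) ^ (-r) :=
            Finset.sum_nonneg fun i _ => (Real.rpow_pos_of_pos (hx i) _).le
          exact Set.mem_Ici.mpr (by positivity)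
        have h1r : (1:ℝ) ≤ 1 / r := by
          rw [le_div_iff₀ hpos]; linarith
        exact aux_comp_mono (convexOn_rpow h1r) hinner hmaps
          (fun u hu v _ huv => Real.rpow_le_rpow hu huv (by linarith))
    refine key.congr fun x hx => ?_
    simp only [powerMean, if_neg hr0]
    congr 2
    refine Finset.sum_congr rfl fun i _ => ?_
    rw [Real.inv_rpow (hx i).le, ← Real.rpow_neg (hx i).le]
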